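/- Assume the coefficients a_{ij}, b_i and A_{ij}, B_i satisfy the PRK symplecticness conditions b_i = B_i for all i and b_i A_{ij} + B_j a_{ji} − b_i B_j = 0 for all i, j = 1,…,s, and let h_0,…,h_{N−1} ∈ ℝ. For each n = 0,…,N−1 and i = 1,…,s let M_{n,i} be a real d × d matrix. Suppose δ_0,…,δ_N ∈ ℝ^d satisfy δ_{n+1} = δ_n + h_n Σ_{i=1}^s b_i d_{n,i} with d_{n,i} = M_{n,i} Δ_{n,i} and Δ_{n,i} = δ_n + h_n Σ_{j=1}^s a_{ij} d_{n,j}, and suppose λ_0,…,λ_N ∈ ℝ^d satisfy λ_{n+1} = λ_n + h_n Σ_{i=1}^s B_i ℓ_{n,i} with ℓ_{n,i} = −M_{n,i}ᵀ Λ_{n,i} and Λ_{n,i} = λ_n + h_n Σ_{j=1}^s A_{ij} ℓ_{n,j}. Then λ_nᵀ δ_n = λ_0ᵀ δ_0 for all n = 0,…,N. In particular, if δ_0 = η and λ_N = ω, then ωᵀ δ_N = λ_0ᵀ η. -/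

import Mathlib

open Matrix BigOperators

lemma alg (s : ℕ) (a A : Fin s → Fin s → ℝ) (b B : Fin s → ℝ)
    (hbB : ∀ i, b i = B i)
    (hsymp : ∀ i j, b i * A i j + B j * a j i - b i * B j = 0)
    (hn : ℝ) (u : Fin s → ℝ) (L : Fin s → Fin s → ℝ) :
    hn * ∑ j, b j * (u j - hn * ∑ k, A j k * L k j)
      + hn * ∑ i, B i * (-(u i) - hn * ∑ k, a i k * L i k)
      + hn * ∑ i, B i * (hn * ∑ j, b j * L i j) = 0 := by
  have e1 : ∑ j, b j * (hn * ∑ k, A j k * L k j)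
      = ∑ i, ∑ j, hn * (b j * A j i * L i j) := by
    rw [Finset.sum_comm]
    exact Finset.sum_congr rfl fun j _ => by
      rw [Finset.mul_sum, Finset.mul_sum]
      exact Finset.sum_congr rfl fun k _ => by ring
  have e2 : ∑ i, B i * (hn * ∑ k, a i k * L i k)
      = ∑ i, ∑ j, hn * (B i * a i j * L i j) := by
    refine Finset.sum_congr rfl fun i _ => ?_
    rw [Finset.mul_sum, Finset.mul_sum]
    exact Finset.sum_congr rfl fun k _ => by ring
  have e3 : ∑ i, B i * (hn * ∑ j, b j * L i j)
      = ∑ i, ∑ j, hn * (B i * b j * L i j) := by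
    refine Finset.sum_congr rfl fun i _ => ?_
    rw [Finset.mul_sum, Finset.mul_sum]
    exact Finset.sum_congr rfl fun k _ => by ring
  have key : ∑ i, ∑ j, hn * (B i * b j * L i j)
      - ∑ i, ∑ j, hn * (b j * A j i * L i j)
      - ∑ i, ∑ j, hn * (B i * a i j * L i j) = 0 := by
    rw [← Finset.sum_sub_distrib, ← Finset.sum_sub_distrib]
    refine Finset.sum_eq_zero fun i _ => ?_
    rw [← Finset.sum_sub_distrib, ← Finset.sum_sub_distrib]
    refine Finset.sum_eq_zero fun j _ => ?_
    linear_combination (-hn * L i j) * hsymp j i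
  have e4 : ∑ j, b j * u j = ∑ i, B i * u i :=
    Finset.sum_congr rfl fun i _ => by rw [hbB]
  calc hn * ∑ j, b j * (u j - hn * ∑ k, A j k * L k j)
      + hn * ∑ i, B i * (-(u i) - hn * ∑ k, a i k * L i k)
      + hn * ∑ i, B i * (hn * ∑ j, b j * L i j)
      = hn * ((∑ j, b j * u j) - ∑ j, b j * (hn * ∑ k, A j k * L k j))
        + hn * ((- ∑ i, B i * u i) - ∑ i, B i * (hn * ∑ k, a i k * L i k))
        + hn * ∑ i, B i * (hn * ∑ j, b j * L i j) := by
        simp only [mul_sub, mul_neg, Finset.sum_sub_distrib, Finset.sum_neg_distrib]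
    _ = hn * ((∑ i, ∑ j, hn * (B i * b j * L i j))
        - (∑ i, ∑ j, hn * (b j * A j i * L i j))
        - (∑ i, ∑ j, hn * (B i * a i j * L i j))) := by
        rw [e1, e2, e3, e4]; ring
    _ = 0 := by rw [key, mul_zero]

lemma dotProduct_sum' {ι d : Type*} [Fintype ι] [Fintype d] (v : d → ℝ)
    (f : ι → d → ℝ) : v ⬝ᵥ (∑ i, f i) = ∑ i, v ⬝ᵥ f i := by
  simp only [dotProduct, Finset.sum_apply, Finset.mul_sum]
  exact Finset.sum_comm

lemma sum_dotProduct' {ι d : Type*} [Fintype ι] [Fintype d] (v : d → ℝ)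
    (f : ι → d → ℝ) : (∑ i, f i) ⬝ᵥ v = ∑ i, f i ⬝ᵥ v := by
  simp only [dotProduct, Finset.sum_apply, Finset.sum_mul]
  exact Finset.sum_comm

lemma hexp1 {ι d : Type*} [Fintype ι] [Fintype d] (c : ℝ) (w : ι → ℝ)
    (f : ι → d → ℝ) (v : d → ℝ) :
    v ⬝ᵥ (c • ∑ i, w i • f i) = c * ∑ i, w i * (v ⬝ᵥ f i) := by
  rw [dotProduct_smul, smul_eq_mul, dotProduct_sum']
  congr 1
  exact Finset.sum_congr rfl fun i _ => by rw [dotProduct_smul, smul_eq_mul]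

lemma hexp2 {ι d : Type*} [Fintype ι] [Fintype d] (c : ℝ) (w : ι → ℝ)
    (f : ι → d → ℝ) (v : d → ℝ) :
    (c • ∑ i, w i • f i) ⬝ᵥ v = c * ∑ i, w i * (f i ⬝ᵥ v) := by
  rw [smul_dotProduct, smul_eq_mul, sum_dotProduct']
  congr 1
  exact Finset.sum_congr rfl fun i _ => by rw [smul_dotProduct, smul_eq_mul]

theorem stmt_8 (d s N : ℕ)
    (a A : Fin s → Fin s → ℝ) (b B : Fin s → ℝ)
    (hbB : ∀ i, b i = B i)
    (hsymp : ∀ i j, b i * A i j + B j * a j i - b i * B j = 0)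
    (h : Fin N → ℝ)
    (M : Fin N → Fin s → Matrix (Fin d) (Fin d) ℝ)
    (δ lam : Fin (N + 1) → Fin d → ℝ)
    (dd Δ ell Lam : Fin N → Fin s → Fin d → ℝ)
    (hδstep : ∀ n : Fin N, δ n.succ = δ n.castSucc + h n • ∑ i, b i • dd n i)
    (hdd : ∀ (n : Fin N) (i : Fin s), dd n i = (M n i).mulVec (Δ n i))
    (hΔ : ∀ (n : Fin N) (i : Fin s),
      Δ n i = δ n.castSucc + h n • ∑ j, a i j • dd n j)
    (hlamstep : ∀ n : Fin N, lam n.succ = lam n.castSucc + h n • ∑ i, B i • ell n i)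
    (hell : ∀ (n : Fin N) (i : Fin s), ell n i = -((M n i)ᵀ.mulVec (Lam n i)))
    (hLam : ∀ (n : Fin N) (i : Fin s),
      Lam n i = lam n.castSucc + h n • ∑ j, A i j • ell n j) :
    (∀ n, lam n ⬝ᵥ δ n = lam 0 ⬝ᵥ δ 0) ∧
      ∀ η ω : Fin d → ℝ, δ 0 = η → lam (Fin.last N) = ω →
        ω ⬝ᵥ δ (Fin.last N) = lam 0 ⬝ᵥ η := by
  have step : ∀ n : Fin N, lam n.succ ⬝ᵥ δ n.succ = lam n.castSucc ⬝ᵥ δ n.castSucc := by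
    intro n
    have hP : ∀ j, lam n.castSucc ⬝ᵥ dd n j
        = (Lam n j ⬝ᵥ dd n j) - h n * ∑ k, A j k * (ell n k ⬝ᵥ dd n j) := by
      intro j
      have e : lam n.castSucc = Lam n j - h n • ∑ k, A j k • ell n k := by
        rw [hLam n j]; abel
      rw [e, sub_dotProduct, hexp2]
    have hQ : ∀ i, ell n i ⬝ᵥ δ n.castSucc
        = -(Lam n i ⬝ᵥ dd n i) - h n * ∑ k, a i k * (ell n i ⬝ᵥ dd n k) := by
      intro i
      have e : δ n.castSucc = Δ n i - h n • ∑ k, a i k • dd n k := by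
        rw [hΔ n i]; abel
      have h2 : ell n i ⬝ᵥ Δ n i = -(Lam n i ⬝ᵥ dd n i) := by
        rw [hell n i, neg_dotProduct, Matrix.mulVec_transpose, neg_inj,
          hdd n i, ← Matrix.dotProduct_mulVec]
      rw [e, dotProduct_sub, hexp1, h2]
    have expand : lam n.succ ⬝ᵥ δ n.succ = lam n.castSucc ⬝ᵥ δ n.castSucc
        + (h n * ∑ j, b j * (lam n.castSucc ⬝ᵥ dd n j)
          + h n * ∑ i, B i * (ell n i ⬝ᵥ δ n.castSucc)
          + h n * ∑ i, B i * (h n * ∑ j, b j * (ell n i ⬝ᵥ dd n j))) := by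
      rw [hδstep n, hlamstep n, dotProduct_add, add_dotProduct,
        add_dotProduct, hexp1, hexp2, hexp2]
      have e3 : ∑ i, B i * (ell n i ⬝ᵥ (h n • ∑ j, b j • dd n j))
          = ∑ i, B i * (h n * ∑ j, b j * (ell n i ⬝ᵥ dd n j)) :=
        Finset.sum_congr rfl fun i _ => by rw [hexp1]
      rw [e3]
      ring
    rw [expand,
      Finset.sum_congr rfl (fun j _ => by rw [hP j] :
        ∀ j ∈ Finset.univ, b j * (lam n.castSucc ⬝ᵥ dd n j)
          = b j * ((Lam n j ⬝ᵥ dd n j) - h n * ∑ k, A j k * (ell n k ⬝ᵥ dd n j))),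
      Finset.sum_congr rfl (fun i _ => by rw [hQ i] :
        ∀ i ∈ Finset.univ, B i * (ell n i ⬝ᵥ δ n.castSucc)
          = B i * (-(Lam n i ⬝ᵥ dd n i) - h n * ∑ k, a i k * (ell n i ⬝ᵥ dd n k)))]
    have AL := alg s a A b B hbB hsymp (h n) (fun i => Lam n i ⬝ᵥ dd n i)
      (fun i j => ell n i ⬝ᵥ dd n j)
    rw [AL, add_zero]
  have main : ∀ n : Fin (N + 1), lam n ⬝ᵥ δ n = lam 0 ⬝ᵥ δ 0 := by
    intro n
    induction n using Fin.induction with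
    | zero => rfl
    | succ i ih => rw [step i]; exact ih
  exact ⟨main, fun η ω hη hω => by rw [← hω, ← hη]; exact main (Fin.last N)⟩
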